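/- The fundamental group of L⁰(Ω,S) (endowed with the topology of convergence in probability) is trivial, for any complete separable metric space S and complete nonatomic probability space Ω; i.e., every loop in L⁰(Ω,S) is null-homotopic. -/

import Mathlib

open MeasureTheory Filter Topology Set
open scoped ENNReal NNReal

/-- The Ky Fan distance between two `S`-valued random variables on `(Ω, P)`:
`inf {ε > 0 : P{ω : d(X ω, Y ω) ≥ ε} ≤ ε}`. -/
noncomputable def kyFanDist {Ω S : Type*} [MeasurableSpace Ω] [PseudoMetricSpace S]
    (P : Measure Ω) (X Y : Ω → S) : ℝ :=
  sInf {ε : ℝ | 0 < ε ∧ (P {ω | ε ≤ dist (X ω) (Y ω)}).toReal ≤ ε}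

/-- A measure is nonatomic if every set of positive measure contains a measurable
subset of strictly smaller positive measure. -/
def Nonatomic {Ω : Type*} [MeasurableSpace Ω] (P : Measure Ω) : Prop :=
  ∀ A : Set Ω, MeasurableSet A → 0 < P A →
    ∃ B ⊆ A, MeasurableSet B ∧ 0 < P B ∧ P B < P A

/-- A finitely supported measure: a finite convex combination of Dirac measures. -/
def FinitelySupported {S : Type*} [MeasurableSpace S] (μ : Measure S) : Prop :=
  ∃ (n : ℕ) (c : Fin n → ℝ≥0∞) (a : Fin n → S),
    (∑ i, c i) = 1 ∧ μ = ∑ i, c i • Measure.dirac (a i)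

/-- Continuity of a path of random variables with respect to the Ky Fan metric
(equivalently, the topology of convergence in probability). -/
def KyFanContinuousOn {Ω S : Type*} [MeasurableSpace Ω] [PseudoMetricSpace S]
    (P : Measure Ω) (γ : ℝ → Ω → S) (A : Set ℝ) : Prop :=
  ∀ t ∈ A, ∀ ε > 0, ∃ δ > 0, ∀ s ∈ A, |s - t| < δ → kyFanDist P (γ s) (γ t) < ε

/-- Continuity of a path of measures with respect to the Lévy–Prokhorov metric. -/
def LPContinuousOn {S : Type*} [MeasurableSpace S] [PseudoMetricSpace S]
    (α : ℝ → Measure S) (A : Set ℝ) : Prop :=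
  ∀ t ∈ A, ∀ ε > 0, ∃ δ > 0, ∀ s ∈ A, |s - t| < δ → levyProkhorovDist (α s) (α t) < ε

/-- A polygonal path in the space of measures with vertices in `V`: there is a partition
`0 = t₀ < t₁ < ⋯ < t_{n+1} = 1` and vertices `μᵢ ∈ V` such that on `[tᵢ, tᵢ₊₁]` the path
is the affine interpolation of `μᵢ` and `μᵢ₊₁`. -/
def IsPolygonalWithVertices {S : Type*} [MeasurableSpace S] (β : ℝ → Measure S)
    (V : Set (Measure S)) : Prop :=
  ∃ (n : ℕ) (t : Fin (n + 2) → ℝ) (μ : Fin (n + 2) → Measure S),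
    StrictMono t ∧ t 0 = 0 ∧ t (Fin.last (n + 1)) = 1 ∧ (∀ i, μ i ∈ V) ∧
    ∀ (i : Fin (n + 1)), ∀ s ∈ Set.Icc (t i.castSucc) (t i.succ),
      β s = ENNReal.ofReal ((t i.succ - s) / (t i.succ - t i.castSucc)) • μ i.castSucc
        + ENNReal.ofReal ((s - t i.castSucc) / (t i.succ - t i.castSucc)) • μ i.succ

section Aux
variable {Ω : Type*} [MeasurableSpace Ω] (P : Measure Ω) [IsProbabilityMeasure P]


lemma halve (hna : Nonatomic P) {A : Set Ω} (hA : MeasurableSet A) (h : 0 < P A) :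
    ∃ B ⊆ A, MeasurableSet B ∧ 0 < P B ∧ 2 * P B ≤ P A := by
  obtain ⟨B, hBA, hBm, hB0, hBlt⟩ := hna A hA h
  by_cases hc : 2 * P B ≤ P A
  · exact ⟨B, hBA, hBm, hB0, hc⟩
  · refine ⟨A \ B, diff_subset, hA.diff hBm, ?_, ?_⟩
    · have hsum : P B + P (A \ B) = P A := by
        rw [measure_add_diff hBm.nullMeasurableSet, union_eq_self_of_subset_left hBA]
      rcases eq_or_lt_of_le (zero_le : 0 ≤ P (A \ B)) with h0 | h0
      · exfalso; rw [← hsum, ← h0, add_zero] at hBlt; exact lt_irrefl _ hBlt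
      · exact h0
    · have hsum : P B + P (A \ B) = P A := by
        rw [measure_add_diff hBm.nullMeasurableSet, union_eq_self_of_subset_left hBA]
      push_neg at hc
      have hfin : P B ≠ ∞ := measure_ne_top P B
      have h1 : P (A \ B) ≤ P B := by
        have : P B + P (A \ B) < P B + P B := by
          rw [hsum]; calc P A < 2 * P B := hc
            _ = P B + P B := two_mul _
        exact le_of_lt (ENNReal.add_lt_add_iff_left hfin |>.mp this)
      calc 2 * P (A \ B) = P (A \ B) + P (A \ B) := two_mul _
        _ ≤ P B + P (A \ B) := by gcongr
        _ = P A := hsum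

lemma small (hna : Nonatomic P) {A : Set Ω} (hA : MeasurableSet A) (h : 0 < P A)
    {t : ℝ≥0∞} (ht : 0 < t) :
    ∃ B ⊆ A, MeasurableSet B ∧ 0 < P B ∧ P B ≤ t := by
  have key : ∀ k : ℕ, ∃ B ⊆ A, MeasurableSet B ∧ 0 < P B ∧ 2 ^ k * P B ≤ P A := by
    intro k
    induction k with
    | zero => exact ⟨A, subset_rfl, hA, h, by simp⟩
    | succ k ih =>
      obtain ⟨B, hBA, hBm, hB0, hBle⟩ := ih
      obtain ⟨C, hCB, hCm, hC0, hCle⟩ := halve P hna hBm hB0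
      refine ⟨C, hCB.trans hBA, hCm, hC0, ?_⟩
      calc 2 ^ (k + 1) * P C = 2 ^ k * (2 * P C) := by ring
        _ ≤ 2 ^ k * P B := by gcongr
        _ ≤ P A := hBle
  obtain ⟨n, hn⟩ := ENNReal.exists_inv_two_pow_lt ht.ne'
  obtain ⟨B, hBA, hBm, hB0, hBle⟩ := key n
  refine ⟨B, hBA, hBm, hB0, le_trans ?_ hn.le⟩
  have h1 : 2 ^ n * P B ≤ 1 := le_trans hBle prob_le_one
  rw [← ENNReal.inv_pow, ENNReal.le_inv_iff_mul_le]
  calc P B * 2 ^ n = 2 ^ n * P B := mul_comm _ _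
    _ ≤ 1 := h1

lemma exact_subset (hna : Nonatomic P) {A : Set Ω} (hA : MeasurableSet A)
    {c : ℝ≥0∞} (hc : c ≤ P A) :
    ∃ B ⊆ A, MeasurableSet B ∧ P B = c := by
  -- near-maximal greedy step
  have hstep : ∀ B : Set Ω, MeasurableSet B → P B ≤ c →
      ∃ D : Set Ω, D ⊆ A \ B ∧ MeasurableSet D ∧ P B + P D ≤ c ∧
        ∀ D' : Set Ω, D' ⊆ A \ B → MeasurableSet D' → P B + P D' ≤ c →
          P D' ≤ 2 * P D := by
    intro B hBm hBc
    set T : Set ℝ≥0∞ := {x | ∃ D' : Set Ω, D' ⊆ A \ B ∧ MeasurableSet D' ∧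
      P B + P D' ≤ c ∧ P D' = x} with hT
    have hTmem : ∀ {D' : Set Ω}, D' ⊆ A \ B → MeasurableSet D' → P B + P D' ≤ c →
        P D' ∈ T := fun h1 h2 h3 => ⟨_, h1, h2, h3, rfl⟩
    by_cases hδ : sSup T = 0
    · refine ⟨∅, empty_subset _, MeasurableSet.empty, by simpa using hBc, ?_⟩
      intro D' h1 h2 h3
      have := le_sSup (hTmem h1 h2 h3)
      rw [hδ] at this
      simpa using this
    · have hTle : sSup T ≤ 1 := by
        apply sSup_le
        rintro x ⟨D', -, -, -, rfl⟩
        exact prob_le_one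
      have hfin : sSup T ≠ ∞ := ne_top_of_le_ne_top ENNReal.one_ne_top hTle
      have hhalf : sSup T / 2 < sSup T := ENNReal.half_lt_self hδ hfin
      obtain ⟨x, ⟨D, hD1, hD2, hD3, rfl⟩, hxlt⟩ := lt_sSup_iff.mp hhalf
      refine ⟨D, hD1, hD2, hD3, ?_⟩
      intro D' h1 h2 h3
      calc P D' ≤ sSup T := le_sSup (hTmem h1 h2 h3)
        _ = 2 * (sSup T / 2) := by
            rw [ENNReal.mul_div_cancel' (by norm_num) (by norm_num)]
        _ ≤ 2 * P D := mul_le_mul_right hxlt.le 2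
  choose! D hD1 hD2 hD3 hD4 using hstep
  set seq : ℕ → Set Ω := fun n => Nat.rec ∅ (fun _ B => B ∪ D B) n with hseq
  have hseq0 : seq 0 = ∅ := rfl
  have hseqS : ∀ n, seq (n + 1) = seq n ∪ D (seq n) := fun n => rfl
  -- invariants
  have hinv : ∀ n, MeasurableSet (seq n) ∧ seq n ⊆ A ∧ P (seq n) ≤ c := by
    intro n
    induction n with
    | zero => exact ⟨MeasurableSet.empty, empty_subset _, by rw [hseq0]; simp⟩
    | succ n ih =>
      obtain ⟨hm, hsub, hle⟩ := ih
      have h1 := hD1 (seq n) hm hle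
      have h2 := hD2 (seq n) hm hle
      have h3 := hD3 (seq n) hm hle
      rw [hseqS]
      refine ⟨hm.union h2, union_subset hsub (h1.trans diff_subset), ?_⟩
      calc P (seq n ∪ D (seq n)) ≤ P (seq n) + P (D (seq n)) := measure_union_le _ _
        _ ≤ c := h3
  have hmono : Monotone seq := by
    apply monotone_nat_of_le_succ
    intro n; rw [hseqS]; exact subset_union_left
  set Binf : Set Ω := ⋃ n, seq n with hBinf
  have hBinfm : MeasurableSet Binf := MeasurableSet.iUnion (fun n => (hinv n).1)
  have hBinfA : Binf ⊆ A := iUnion_subset (fun n => (hinv n).2.1)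
  have hBinfP : P Binf = ⨆ n, P (seq n) := hmono.directed_le.measure_iUnion
  have hBinfc : P Binf ≤ c := by rw [hBinfP]; exact iSup_le (fun n => (hinv n).2.2)
  refine ⟨Binf, hBinfA, hBinfm, ?_⟩
  rcases eq_or_lt_of_le hBinfc with h | h
  · exact h
  · exfalso
    -- positive measure remains
    have hrem : 0 < P (A \ Binf) := by
      rcases eq_or_lt_of_le (zero_le : 0 ≤ P (A \ Binf)) with h0 | h0
      · exfalso
        have hsub : A ⊆ (A \ Binf) ∪ Binf := subset_diff_union A Binf
        have : P A ≤ P (A \ Binf) + P Binf :=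
          (measure_mono hsub).trans (measure_union_le _ _)
        rw [← h0, zero_add] at this
        exact absurd (hc.trans this) (not_le.mpr h)
      · exact h0
    obtain ⟨Dst, hDst1, hDst2, hDst3, hDst4⟩ :=
      small P hna (hA.diff hBinfm) hrem (tsub_pos_of_lt h)
    -- Dst works at every stage
    have hgood : ∀ n, P Dst ≤ 2 * P (D (seq n)) := by
      intro n
      obtain ⟨hm, hsub, hle⟩ := hinv n
      apply hD4 (seq n) hm hle Dst _ hDst2
      · calc P (seq n) + P Dst ≤ P Binf + (c - P Binf) :=
              add_le_add (measure_mono (subset_iUnion seq n)) hDst4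
          _ = c := add_tsub_cancel_of_le h.le
      · exact hDst1.trans (diff_subset_diff_right (subset_iUnion seq n))
    -- growth: P (seq n) ≥ n * (P Dst / 2)
    have hgrow : ∀ n : ℕ, (n : ℝ≥0∞) * (P Dst / 2) ≤ P (seq n) := by
      intro n
      induction n with
      | zero => simp
      | succ n ih =>
        obtain ⟨hm, hsub, hle⟩ := hinv n
        have hDn := hD1 (seq n) hm hle
        have hDm := hD2 (seq n) hm hle
        have hun : P (seq (n+1)) = P (seq n) + P (D (seq n)) := by
          rw [hseqS, measure_union _ hDm]
          exact Disjoint.mono_right hDn disjoint_sdiff_right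
        have hhalf : P Dst / 2 ≤ P (D (seq n)) := by
          rw [ENNReal.div_le_iff (by norm_num) (by norm_num)]
          calc P Dst ≤ 2 * P (D (seq n)) := hgood n
            _ = P (D (seq n)) * 2 := mul_comm _ _
        calc ((n + 1 : ℕ) : ℝ≥0∞) * (P Dst / 2)
            = (n : ℝ≥0∞) * (P Dst / 2) + P Dst / 2 := by push_cast; ring
          _ ≤ P (seq n) + P (D (seq n)) := add_le_add ih hhalf
          _ = P (seq (n+1)) := hun.symm
    -- contradiction via archimedean
    have hx0 : 0 < P Dst / 2 := ENNReal.div_pos hDst3.ne' (by norm_num)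
    have hxfin : P Dst / 2 ≠ ∞ := by
      apply ne_top_of_le_ne_top ENNReal.one_ne_top
      calc P Dst / 2 ≤ P Dst := ENNReal.half_le_self
        _ ≤ 1 := prob_le_one
    have hb : ∀ n : ℕ, (n : ℝ≥0∞) * (P Dst / 2) ≤ 1 :=
      fun n => (hgrow n).trans prob_le_one
    set x := (P Dst / 2).toReal with hxdef
    have hxpos : 0 < x := ENNReal.toReal_pos hx0.ne' hxfin
    obtain ⟨n, hn⟩ := exists_nat_gt (1 / x)
    have : (n : ℝ) * x ≤ 1 := by
      have := hb n
      have h2 : ((n : ℝ≥0∞) * (P Dst / 2)).toReal ≤ 1 := by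
        rw [← ENNReal.toReal_one]
        exact ENNReal.toReal_mono ENNReal.one_ne_top this
      rwa [ENNReal.toReal_mul, ENNReal.toReal_natCast] at h2
    have : 1 < (n : ℝ) * x := by
      rw [div_lt_iff₀ hxpos] at hn
      linarith
    linarith

/-- property of level-`n` dyadic family -/
def DyProp {Ω : Type*} [MeasurableSpace Ω] (P : Measure Ω) (n : ℕ) (g : ℕ → Set Ω) : Prop :=
  (∀ k, MeasurableSet (g k)) ∧ g 0 = ∅ ∧ (∀ k, g k ⊆ g (k + 1)) ∧
    (∀ k, k ≤ 2 ^ n → P (g k) = (k : ℝ≥0∞) / 2 ^ n)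

lemma dy_base : DyProp P 0 (fun k => if k = 0 then (∅ : Set Ω) else univ) := by
  refine ⟨fun k => ?_, by simp, fun k => ?_, fun k hk => ?_⟩
  · by_cases h : k = 0 <;> simp [h]
  · by_cases h : k = 0 <;> simp [h]
  · interval_cases k <;> simp

lemma dy_step (hna : Nonatomic P) (n : ℕ) (g : ℕ → Set Ω) (hg : DyProp P n g) :
    ∃ g' : ℕ → Set Ω, DyProp P (n + 1) g' ∧ ∀ k, g' (2 * k) = g k := by
  obtain ⟨hmeas, h0, hmono, hP⟩ := hg
  have hmono' : Monotone g := monotone_nat_of_le_succ hmono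
  -- choose the midpoint sets
  have hmid : ∀ m : ℕ, m + 1 ≤ 2 ^ n → ∃ C ⊆ g (m + 1) \ g m, MeasurableSet C ∧
      P C = (1 : ℝ≥0∞) / 2 ^ (n + 1) := by
    intro m hm
    have hdiff : P (g (m + 1) \ g m) = 1 / 2 ^ n := by
      have h1 : P (g m) + P (g (m + 1) \ g m) = P (g (m + 1)) := by
        rw [measure_add_diff (hmeas m).nullMeasurableSet,
          union_eq_self_of_subset_left (hmono m)]
      rw [hP m (le_trans (Nat.le_succ m) hm), hP (m + 1) hm] at h1
      have h2 : ((m + 1 : ℕ) : ℝ≥0∞) / 2 ^ n = (m : ℝ≥0∞) / 2 ^ n + 1 / 2 ^ n := by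
        rw [← ENNReal.add_div]; push_cast; ring_nf
      rw [h2] at h1
      exact ((ENNReal.add_right_inj
        (ENNReal.div_lt_top (ENNReal.natCast_ne_top m) (by positivity)).ne).mp h1)
    have hle : (1 : ℝ≥0∞) / 2 ^ (n + 1) ≤ P (g (m + 1) \ g m) := by
      rw [hdiff]
      exact ENNReal.div_le_div_left (by gcongr <;> norm_num) 1
    obtain ⟨C, hC1, hC2, hC3⟩ := exact_subset P hna ((hmeas (m + 1)).diff (hmeas m)) hle
    exact ⟨C, hC1, hC2, hC3⟩
  choose! C hC1 hC2 hC3 using hmid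
  set g' : ℕ → Set Ω := fun k => if k % 2 = 0 then g (k / 2)
      else (if k / 2 + 1 ≤ 2 ^ n then g (k / 2) ∪ C (k / 2) else g (k / 2)) with hg'
  have e1 : ∀ m, g' (2 * m) = g m := by
    intro m
    simp [hg', Nat.mul_mod_right, Nat.mul_div_cancel_left _ (by norm_num : 0 < 2)]
  have e2 : ∀ m, g' (2 * m + 1) =
      if m + 1 ≤ 2 ^ n then g m ∪ C m else g m := by
    intro m
    have h1 : (2 * m + 1) % 2 = 1 := by omega
    have h2 : (2 * m + 1) / 2 = m := by omega
    simp only [hg', h1, h2]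
    norm_num
  have hpow : (2 : ℕ) ^ (n + 1) = 2 * 2 ^ n := by ring
  have hdd : ∀ m : ℕ, (m : ℝ≥0∞) / 2 ^ n = (2 * m : ℕ) / 2 ^ (n + 1) := by
    intro m
    push_cast
    rw [pow_succ, mul_comm ((2:ℝ≥0∞) ^ n) 2, ENNReal.mul_div_mul_left _ _ (by norm_num) (by norm_num)]
  refine ⟨g', ⟨?_, ?_, ?_, ?_⟩, e1⟩
  · -- measurability
    intro k
    simp only [hg']
    split_ifs with h1 h2
    · exact hmeas _
    · exact (hmeas _).union (hC2 _ h2)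
    · exact hmeas _
  · -- g' 0 = ∅
    have := e1 0
    simpa using this.trans h0
  · -- monotone step
    intro k
    rcases Nat.even_or_odd k with ⟨m, hm⟩ | ⟨m, hm⟩
    · subst hm
      rw [show m + m = 2 * m by ring, e1, e2]
      split_ifs with h
      · exact subset_union_left
      · exact subset_rfl
    · subst hm
      rw [show 2 * m + 1 + 1 = 2 * (m + 1) by ring, e2, e1]
      split_ifs with h
      · exact union_subset (hmono m) ((hC1 m h).trans (diff_subset.trans subset_rfl))
      · exact hmono m
  · -- measures
    intro k hk
    rcases Nat.even_or_odd k with ⟨m, hm⟩ | ⟨m, hm⟩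
    · subst hm
      rw [show m + m = 2 * m by ring] at hk ⊢
      rw [e1, hP m (by omega), hdd]
    · subst hm
      have hm1 : m + 1 ≤ 2 ^ n := by omega
      rw [e2, if_pos hm1]
      have : P (g m ∪ C m) = P (g m) + P (C m) := by
        rw [measure_union _ (hC2 m hm1)]
        exact Disjoint.mono_right (hC1 m hm1) disjoint_sdiff_right
      rw [this, hP m (by omega), hC3 m hm1, hdd]
      rw [← ENNReal.add_div]
      congr 1
      push_cast
      ring

lemma kfun_facts (n : ℕ) {s : ℝ} (hs0 : 0 < s) (hs1 : s ≤ 1) :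
    ((⌈s * 2 ^ n⌉₊ - 1 : ℕ) : ℝ) < s * 2 ^ n ∧ s * 2 ^ n - 1 ≤ ((⌈s * 2 ^ n⌉₊ - 1 : ℕ) : ℝ) ∧
      (⌈s * 2 ^ n⌉₊ - 1 : ℕ) ≤ 2 ^ n := by
  set x : ℝ := s * 2 ^ n with hx
  have hxpos : 0 < x := by positivity
  have hceil1 : 1 ≤ ⌈x⌉₊ := Nat.one_le_iff_ne_zero.mpr (by
    simp [Nat.ceil_eq_zero, not_le, hxpos])
  have hcast : ((⌈x⌉₊ - 1 : ℕ) : ℝ) = (⌈x⌉₊ : ℝ) - 1 := by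
    push_cast [Nat.cast_sub hceil1]; ring
  refine ⟨?_, ?_, ?_⟩
  · rw [hcast]
    have := Nat.ceil_lt_add_one (le_of_lt hxpos)
    linarith
  · rw [hcast]
    have := Nat.le_ceil x
    linarith
  · have : ⌈x⌉₊ ≤ 2 ^ n := by
      rw [Nat.ceil_le]
      push_cast
      nlinarith [pow_pos (by norm_num : (0:ℝ) < 2) n]
    omega

lemma family (hna : Nonatomic P) :
    ∃ A : ℝ → Set Ω, (∀ s, MeasurableSet (A s)) ∧ A 0 = ∅ ∧ A 1 = univ ∧
      Monotone A ∧ ∀ s ∈ Icc (0:ℝ) 1, P (A s) = ENNReal.ofReal s := by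
  classical
  choose! step hstep1 hstep2 using dy_step P hna
  set G : ℕ → ℕ → Set Ω := fun n => Nat.rec (fun k => if k = 0 then (∅ : Set Ω) else univ)
    (fun n g => step n g) n with hGdef
  have hG : ∀ n, DyProp P n (G n) := by
    intro n
    induction n with
    | zero => exact dy_base P
    | succ n ih => exact hstep1 n (G n) ih
  have hGcoh : ∀ n k, G (n + 1) (2 * k) = G n k := fun n k => hstep2 n (G n) (hG n) k
  have hGmono : ∀ n, Monotone (G n) := fun n => monotone_nat_of_le_succ (hG n).2.2.1
  have hG0 : ∀ n, G n 0 = ∅ := fun n => (hG n).2.1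
  set kf : ℕ → ℝ → ℕ := fun n s => ⌈s * 2 ^ n⌉₊ - 1 with hkf
  set A : ℝ → Set Ω := fun s => if 1 ≤ s then univ else ⋃ n, G n (kf n s) with hA
  have hkmono : ∀ n, Monotone (kf n) := by
    intro n a b hab
    have : ⌈a * 2 ^ n⌉₊ ≤ ⌈b * 2 ^ n⌉₊ := Nat.ceil_le_ceil (by nlinarith [pow_pos (by norm_num : (0:ℝ) < 2) n])
    simp only [hkf]
    omega
  have hknest : ∀ n (s : ℝ), 0 < s → 2 * kf n s ≤ kf (n + 1) s := by
    intro n s hs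
    have hxpos : 0 < s * 2 ^ n := by positivity
    have hceil1 : 1 ≤ ⌈s * 2 ^ n⌉₊ := Nat.one_le_iff_ne_zero.mpr (by
      simp [Nat.ceil_eq_zero, not_le, hxpos])
    have h2x : s * 2 ^ (n + 1) = 2 * (s * 2 ^ n) := by ring
    have key : 2 * ⌈s * 2 ^ n⌉₊ ≤ ⌈s * 2 ^ (n + 1)⌉₊ + 1 := by
      have h1 : (⌈s * 2 ^ n⌉₊ : ℝ) < s * 2 ^ n + 1 := Nat.ceil_lt_add_one (le_of_lt hxpos)
      have h2 : 2 * (s * 2 ^ n) ≤ (⌈s * 2 ^ (n + 1)⌉₊ : ℝ) := h2x ▸ Nat.le_ceil _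
      have : ((2 * ⌈s * 2 ^ n⌉₊ : ℕ) : ℝ) < ((⌈s * 2 ^ (n + 1)⌉₊ + 2 : ℕ) : ℝ) := by
        push_cast; linarith
      exact_mod_cast Nat.lt_succ_iff.mp (by exact_mod_cast this)
    simp only [hkf]
    omega
  have hAmeas : ∀ s, MeasurableSet (A s) := by
    intro s
    simp only [hA]
    split_ifs
    · exact MeasurableSet.univ
    · exact MeasurableSet.iUnion (fun n => (hG n).1 _)
  have hA0 : A 0 = ∅ := by
    simp only [hA, if_neg (by norm_num : ¬(1:ℝ) ≤ 0)]
    have : ∀ n, kf n 0 = 0 := by intro n; simp [hkf]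
    simp [this, hG0]
  have hA1 : A 1 = univ := by simp [hA]
  have hAmono : Monotone A := by
    intro a b hab
    simp only [hA]
    split_ifs with h1 h2 h2
    · exact le_rfl
    · exact absurd (h1.trans hab) h2
    · exact subset_univ _
    · exact iUnion_mono (fun n => hGmono n (hkmono n hab))
  refine ⟨A, hAmeas, hA0, hA1, hAmono, ?_⟩
  intro s ⟨hs0, hs1⟩
  rcases eq_or_lt_of_le hs1 with h1 | h1
  · rw [h1] at *; rw [hA1]; simp [measure_univ]
  rcases eq_or_lt_of_le hs0 with h0 | h0
  · rw [← h0] at *; rw [hA0]; simp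
  -- now 0 < s < 1
  have hnle : ¬ (1:ℝ) ≤ s := not_le.mpr h1
  have hAs : A s = ⋃ n, G n (kf n s) := by simp only [hA, if_neg hnle]
  have hGmonon : Monotone (fun n => G n (kf n s)) := by
    apply monotone_nat_of_le_succ
    intro n
    calc G n (kf n s) = G (n + 1) (2 * kf n s) := (hGcoh n _).symm
      _ ⊆ G (n + 1) (kf (n + 1) s) := hGmono (n + 1) (hknest n s h0)
  have hPn : ∀ n, P (G n (kf n s)) = (kf n s : ℝ≥0∞) / 2 ^ n := by
    intro n
    exact (hG n).2.2.2 _ (kfun_facts n h0 hs1).2.2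
  have hsup : P (A s) = ⨆ n, P (G n (kf n s)) := by
    rw [hAs]
    exact hGmonon.directed_le.measure_iUnion
  rw [hsup]
  have hterm : ∀ n, P (G n (kf n s)) = ENNReal.ofReal ((kf n s : ℝ) / 2 ^ n) := by
    intro n
    rw [hPn n, ENNReal.ofReal_div_of_pos (by positivity)]
    congr 1
    · exact (ENNReal.ofReal_natCast _).symm
    · rw [ENNReal.ofReal_pow (by norm_num : (0:ℝ) ≤ 2)]
      norm_num
  apply le_antisymm
  · apply iSup_le
    intro n
    rw [hterm n]
    apply ENNReal.ofReal_le_ofReal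
    have h := (kfun_facts n h0 hs1).1
    rw [div_le_iff₀ (by positivity : (0:ℝ) < 2 ^ n)]
    linarith
  · apply ENNReal.le_of_forall_pos_le_add
    intro ε hε hfin
    obtain ⟨n, hn⟩ := exists_pow_lt_of_lt_one (by exact_mod_cast hε : (0:ℝ) < ε) (by norm_num : (1:ℝ)/2 < 1)
    have hn' : (1:ℝ) / 2 ^ n < ε := by
      rw [div_pow, one_pow] at hn; exact hn
    have h := (kfun_facts n h0 hs1).2.1
    have hsle : s ≤ (kf n s : ℝ) / 2 ^ n + 1 / 2 ^ n := by
      rw [← add_div, le_div_iff₀ (by positivity : (0:ℝ) < 2 ^ n)]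
      linarith
    calc ENNReal.ofReal s ≤ ENNReal.ofReal ((kf n s : ℝ) / 2 ^ n + 1 / 2 ^ n) :=
          ENNReal.ofReal_le_ofReal hsle
      _ ≤ ENNReal.ofReal ((kf n s : ℝ) / 2 ^ n) + ENNReal.ofReal (1 / 2 ^ n) :=
          ENNReal.ofReal_add_le
      _ ≤ (⨆ n, P (G n (kf n s))) + ε := by
          gcongr
          · rw [← hterm n]; exact le_iSup (fun n => P (G n (kf n s))) n
          · calc ENNReal.ofReal (1 / 2 ^ n) ≤ ENNReal.ofReal ε := ENNReal.ofReal_le_ofReal hn'.le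
              _ = ε := ENNReal.ofReal_coe_nnreal

variable {S : Type*} [PseudoMetricSpace S]


lemma kyFan_lt {X Y : Ω → S} {ε ε' : ℝ} (h0 : 0 < ε') (hlt : ε' < ε)
    (hb : (P {ω | ε' ≤ dist (X ω) (Y ω)}).toReal ≤ ε') : kyFanDist P X Y < ε :=
  lt_of_le_of_lt (csInf_le ⟨0, fun _ hx => hx.1.le⟩ ⟨h0, hb⟩) hlt

lemma kyFan_exists_lt {X Y : Ω → S} {ε : ℝ} (h : kyFanDist P X Y < ε) :
    ∃ η, 0 < η ∧ η < ε ∧ (P {ω | η ≤ dist (X ω) (Y ω)}).toReal ≤ η := by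
  have hne : {ε : ℝ | 0 < ε ∧ (P {ω | ε ≤ dist (X ω) (Y ω)}).toReal ≤ ε}.Nonempty := by
    refine ⟨2, by norm_num, ?_⟩
    calc (P {ω | (2:ℝ) ≤ dist (X ω) (Y ω)}).toReal ≤ (P univ).toReal :=
          ENNReal.toReal_mono (measure_ne_top P univ) (measure_mono (subset_univ _))
      _ = 1 := by simp
      _ ≤ 2 := by norm_num
  obtain ⟨η, hmem, hlt⟩ := exists_lt_of_csInf_lt hne h
  exact ⟨η, hmem.1, hlt, hmem.2⟩

end Aux

/-- Every loop in `L⁰(Ω,S)` (topology of convergence in probability) is null-homotopic: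
there is a Ky Fan continuous homotopy, fixing the base point, from the loop to the
constant loop. In particular the fundamental group of `L⁰(Ω,S)` is trivial. -/
theorem stmt17 {Ω S : Type*} [MeasurableSpace Ω] [MeasurableSpace S] [MetricSpace S]
    [BorelSpace S] [CompleteSpace S] [TopologicalSpace.SeparableSpace S]
    (P : Measure Ω) [IsProbabilityMeasure P] (hna : Nonatomic P)
    (γ : ℝ → Ω → S)
    (hmeas : ∀ t ∈ Set.Icc (0 : ℝ) 1, Measurable (γ t))
    (hcont : KyFanContinuousOn P γ (Set.Icc 0 1))
    (hloop : γ 1 = γ 0) :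
    ∃ H : ℝ → ℝ → Ω → S,
      (∀ s ∈ Set.Icc (0 : ℝ) 1, ∀ t ∈ Set.Icc (0 : ℝ) 1, Measurable (H s t)) ∧
      -- joint continuity of the homotopy in the Ky Fan metric
      (∀ s ∈ Set.Icc (0 : ℝ) 1, ∀ t ∈ Set.Icc (0 : ℝ) 1, ∀ ε > (0 : ℝ), ∃ δ > (0 : ℝ),
        ∀ s' ∈ Set.Icc (0 : ℝ) 1, ∀ t' ∈ Set.Icc (0 : ℝ) 1,
          |s' - s| < δ → |t' - t| < δ → kyFanDist P (H s' t') (H s t) < ε) ∧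
      (∀ t ∈ Set.Icc (0 : ℝ) 1, H 0 t = γ t) ∧
      (∀ t ∈ Set.Icc (0 : ℝ) 1, H 1 t = γ 0) ∧
      (∀ s ∈ Set.Icc (0 : ℝ) 1, H s 0 = γ 0 ∧ H s 1 = γ 0) := by

  classical
  obtain ⟨A, hAmeas, hA0, hA1, hAmono, hAP⟩ := family P hna
  -- difference estimate
  have hdiff : ∀ a ∈ Set.Icc (0:ℝ) 1, ∀ b ∈ Set.Icc (0:ℝ) 1,
      (P (A b \ A a)).toReal ≤ |b - a| := by
    intro a ha b hb
    by_cases hba : b ≤ a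
    · rw [diff_eq_empty.mpr (hAmono hba)]
      simpa using abs_nonneg (b - a)
    · push_neg at hba
      rw [measure_diff (hAmono hba.le) (hAmeas a).nullMeasurableSet (measure_ne_top P _),
        hAP a ha, hAP b hb, ← ENNReal.ofReal_sub _ ha.1,
        ENNReal.toReal_ofReal (by linarith)]
      exact le_abs_self _
  refine ⟨fun s t => (A s).piecewise (γ 0) (γ t), ?_, ?_, ?_, ?_, ?_⟩
  · -- measurability
    intro s _ t ht
    exact Measurable.piecewise (hAmeas s) (hmeas 0 ⟨le_rfl, zero_le_one⟩) (hmeas t ht)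
  · -- joint continuity
    intro s hs t ht ε hε
    obtain ⟨δ₁, hδ₁, hδ₁c⟩ := hcont t ht (ε / 3) (by linarith)
    refine ⟨min δ₁ (ε / 6), lt_min hδ₁ (by linarith), ?_⟩
    intro s' hs' t' ht' hss htt
    have hγ : kyFanDist P (γ t') (γ t) < ε / 3 :=
      hδ₁c t' ht' (lt_of_lt_of_le htt (min_le_left _ _))
    obtain ⟨η, hη0, hηlt, hηb⟩ := kyFan_exists_lt P hγ
    apply kyFan_lt P (show (0:ℝ) < η + ε / 3 by linarith) (by linarith)
    -- inclusion
    set U := {ω | η + ε / 3 ≤ dist (((A s').piecewise (γ 0) (γ t')) ω)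
      (((A s).piecewise (γ 0) (γ t)) ω)} with hU
    have hsub : U ⊆ (A s' \ A s) ∪ (A s \ A s') ∪ {ω | η ≤ dist (γ t' ω) (γ t ω)} := by
      intro ω hω
      simp only [hU, mem_setOf_eq] at hω
      by_cases h1 : ω ∈ A s' <;> by_cases h2 : ω ∈ A s
      · exfalso
        rw [Set.piecewise_eq_of_mem _ _ _ h1, Set.piecewise_eq_of_mem _ _ _ h2] at hω
        simp at hω
        linarith
      · exact Or.inl (Or.inl ⟨h1, h2⟩)
      · exact Or.inl (Or.inr ⟨h2, h1⟩)
      · rw [Set.piecewise_eq_of_notMem _ _ _ h1, Set.piecewise_eq_of_notMem _ _ _ h2] at hω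
        exact Or.inr (by simp only [mem_setOf_eq]; linarith)
    have hmP : P U ≤ P (A s' \ A s) + P (A s \ A s') +
        P {ω | η ≤ dist (γ t' ω) (γ t ω)} := by
      refine (measure_mono hsub).trans ?_
      refine (measure_union_le _ _).trans ?_
      gcongr
      exact measure_union_le _ _
    have htR : (P U).toReal ≤ (P (A s' \ A s)).toReal + (P (A s \ A s')).toReal +
        (P {ω | η ≤ dist (γ t' ω) (γ t ω)}).toReal := by
      have hfin : P (A s' \ A s) + P (A s \ A s') +
          P {ω | η ≤ dist (γ t' ω) (γ t ω)} ≠ ∞ :=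
        ENNReal.add_ne_top.mpr ⟨ENNReal.add_ne_top.mpr
          ⟨measure_ne_top P _, measure_ne_top P _⟩, measure_ne_top P _⟩
      calc (P U).toReal ≤ (P (A s' \ A s) + P (A s \ A s') +
            P {ω | η ≤ dist (γ t' ω) (γ t ω)}).toReal := ENNReal.toReal_mono hfin hmP
        _ = _ := by
            rw [ENNReal.toReal_add (ENNReal.add_ne_top.mpr
              ⟨measure_ne_top P _, measure_ne_top P _⟩) (measure_ne_top P _),
              ENNReal.toReal_add (measure_ne_top P _) (measure_ne_top P _)]
    have h1 : (P (A s' \ A s)).toReal ≤ |s' - s| := hdiff s hs s' hs'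
    have h2 : (P (A s \ A s')).toReal ≤ |s - s'| := hdiff s' hs' s hs
    have h3 : |s - s'| = |s' - s| := abs_sub_comm _ _
    have h4 : |s' - s| < ε / 6 := lt_of_lt_of_le hss (min_le_right _ _)
    show (P U).toReal ≤ η + ε / 3
    linarith
  · -- H 0 t = γ t
    intro t _
    show (A 0).piecewise (γ 0) (γ t) = γ t
    rw [hA0, Set.piecewise_empty]
  · -- H 1 t = γ 0
    intro t _
    show (A 1).piecewise (γ 0) (γ t) = γ 0
    rw [hA1, Set.piecewise_univ]
  · -- H s 0 = H s 1 = γ 0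
    intro s _
    constructor
    · show (A s).piecewise (γ 0) (γ 0) = γ 0
      rw [Set.piecewise_same]
    · show (A s).piecewise (γ 0) (γ 1) = γ 0
      rw [hloop, Set.piecewise_same]
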